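/- Let m be a positive integer and let U : Fin m → Matrix (Fin 3) (Fin 3) ℂ be a family of 3×3 special unitary matrices. Then there exist families of real angles α₁, α₂, …, α₉ : Fin m → ℝ such that blockdiag_j(U j) = D_{Z02}(α₁) · D_{Y02}(α₂) · D_{Z02}(α₃) · D_{Z01}(α₄) · D_{Y01}(α₅) · D_{Z01}(α₆) · D_{Z12}(α₇) · D_{Y12}(α₈) · D_{Z12}(α₉); that is, every block diagonal special unitary matrix with 3×3 special unitary diagonal blocks is a product of nine block diagonal qutrit-rotation matrices. -/

import Mathlib

open Matrix

/-- `e^{ι x}` for a real angle `x`. -/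
noncomputable def eC (x : ℝ) : ℂ := Complex.exp (x * Complex.I)

noncomputable def RX01 (θ : ℝ) : Matrix (Fin 3) (Fin 3) ℂ :=
  !![(Real.cos θ : ℂ), (Real.sin θ : ℂ) * Complex.I, 0;
     (Real.sin θ : ℂ) * Complex.I, (Real.cos θ : ℂ), 0;
     0, 0, 1]

noncomputable def RX12 (θ : ℝ) : Matrix (Fin 3) (Fin 3) ℂ :=
  !![1, 0, 0;
     0, (Real.cos θ : ℂ), (Real.sin θ : ℂ) * Complex.I;
     0, (Real.sin θ : ℂ) * Complex.I, (Real.cos θ : ℂ)]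

noncomputable def RX02 (θ : ℝ) : Matrix (Fin 3) (Fin 3) ℂ :=
  !![(Real.cos θ : ℂ), 0, (Real.sin θ : ℂ) * Complex.I;
     0, 1, 0;
     (Real.sin θ : ℂ) * Complex.I, 0, (Real.cos θ : ℂ)]

noncomputable def RY01 (θ : ℝ) : Matrix (Fin 3) (Fin 3) ℂ :=
  !![(Real.cos θ : ℂ), (Real.sin θ : ℂ), 0;
     (-Real.sin θ : ℂ), (Real.cos θ : ℂ), 0;
     0, 0, 1]

noncomputable def RY12 (θ : ℝ) : Matrix (Fin 3) (Fin 3) ℂ :=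
  !![1, 0, 0;
     0, (Real.cos θ : ℂ), (Real.sin θ : ℂ);
     0, (-Real.sin θ : ℂ), (Real.cos θ : ℂ)]

noncomputable def RY02 (θ : ℝ) : Matrix (Fin 3) (Fin 3) ℂ :=
  !![(Real.cos θ : ℂ), 0, (Real.sin θ : ℂ);
     0, 1, 0;
     (-Real.sin θ : ℂ), 0, (Real.cos θ : ℂ)]

noncomputable def RZ01 (θ : ℝ) : Matrix (Fin 3) (Fin 3) ℂ :=
  !![eC θ, 0, 0; 0, eC (-θ), 0; 0, 0, 1]

noncomputable def RZ12 (θ : ℝ) : Matrix (Fin 3) (Fin 3) ℂ :=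
  !![1, 0, 0; 0, eC θ, 0; 0, 0, eC (-θ)]

noncomputable def RZ02 (θ : ℝ)  : Matrix (Fin 3) (Fin 3) ℂ :=
  !![eC θ, 0, 0; 0, 1, 0; 0, 0, eC (-θ)]

/-- Block diagonal matrix built from a one-qutrit gate family `R` applied to angles `α`. -/
noncomputable def D {m : ℕ} (R : ℝ → Matrix (Fin 3) (Fin 3) ℂ) (α : Fin m → ℝ) :
    Matrix (Fin 3 × Fin m) (Fin 3 × Fin m) ℂ :=
  Matrix.blockDiagonal fun j => R (α j)

/-- Block diagonal matrix with three equal-size diagonal blocks. -/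
noncomputable def diag3 {I : Type*} [DecidableEq I] (A B C : Matrix I I ℂ) :
    Matrix (I × Fin 3) (I × Fin 3) ℂ :=
  Matrix.blockDiagonal ![A, B, C]

lemma eC_mul (x y : ℝ) : eC x * eC y = eC (x + y) := by
  rw [eC, eC, eC, ← Complex.exp_add]; congr 1; push_cast; ring

lemma conj_eC (x : ℝ) : (starRingEnd ℂ) (eC x) = eC (-x) := by
  rw [eC, eC, ← Complex.exp_conj]; congr 1; simp

lemma abs_exp_arg (z : ℂ) : (‖z‖ : ℂ) * eC z.arg = z := by
  simpa [eC] using Complex.norm_mul_exp_arg_mul_I z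

lemma conj_abs_exp_arg (z : ℂ) : (‖z‖ : ℂ) * eC (-z.arg) = (starRingEnd ℂ) z := by
  rw [← conj_eC]
  calc (‖z‖ : ℂ) * (starRingEnd ℂ) (eC z.arg)
      = (starRingEnd ℂ) ((‖z‖ : ℂ) * eC z.arg) := by simp
    _ = (starRingEnd ℂ) z := by rw [abs_exp_arg]

lemma exists_zyz (z w : ℂ) (h : ‖z‖ ^ 2 + ‖w‖ ^ 2 = 1) :
    ∃ a b c : ℝ,
      eC a * (Real.cos b) * eC c = z ∧
      eC a * (Real.sin b) * eC (-c) = w ∧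
      eC (-a) * (Real.sin b) * eC c = (starRingEnd ℂ) w ∧
      eC (-a) * (Real.cos b) * eC (-c) = (starRingEnd ℂ) z := by
  have hw1 : ‖w‖ ≤ 1 := by nlinarith [norm_nonneg z, norm_nonneg w]
  have hw0 : (0:ℝ) ≤ ‖w‖ := norm_nonneg w
  have hsin : Real.sin (Real.arcsin (‖w‖)) = ‖w‖ :=
    Real.sin_arcsin (by linarith) hw1
  have hcos : Real.cos (Real.arcsin (‖w‖)) = ‖z‖ := by
    rw [Real.cos_arcsin]
    have : 1 - ‖w‖ ^ 2 = ‖z‖ ^ 2 := by linarith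
    rw [this, Real.sqrt_sq (norm_nonneg z)]
  refine ⟨(z.arg + w.arg) / 2, Real.arcsin (‖w‖), (z.arg - w.arg) / 2, ?_, ?_, ?_, ?_⟩
  · have E1 := eC_mul ((z.arg + w.arg) / 2) ((z.arg - w.arg) / 2)
    rw [show (z.arg + w.arg) / 2 + (z.arg - w.arg) / 2 = z.arg by ring] at E1
    rw [hcos]; linear_combination (‖z‖ : ℂ) * E1 + abs_exp_arg z
  · have E1 := eC_mul ((z.arg + w.arg) / 2) (-((z.arg - w.arg) / 2))
    rw [show (z.arg + w.arg) / 2 + -((z.arg - w.arg) / 2) = w.arg by ring] at E1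
    rw [hsin]; linear_combination (‖w‖ : ℂ) * E1 + abs_exp_arg w
  · have E1 := eC_mul (-((z.arg + w.arg) / 2)) ((z.arg - w.arg) / 2)
    rw [show -((z.arg + w.arg) / 2) + (z.arg - w.arg) / 2 = -w.arg by ring] at E1
    rw [hsin]; linear_combination (‖w‖ : ℂ) * E1 + conj_abs_exp_arg w
  · have E1 := eC_mul (-((z.arg + w.arg) / 2)) (-((z.arg - w.arg) / 2))
    rw [show -((z.arg + w.arg) / 2) + -((z.arg - w.arg) / 2) = -z.arg by ring] at E1
    rw [hcos]; linear_combination (‖z‖ : ℂ) * E1 + conj_abs_exp_arg z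


lemma sq1_to_c {x y : ℂ} (h : ‖x‖ ^ 2 + ‖y‖ ^ 2 = 1) :
    (starRingEnd ℂ) x * x + (starRingEnd ℂ) y * y = 1 := by
  have h' : ((Complex.normSq x : ℂ)) + (Complex.normSq y : ℂ) = 1 := by
    rw [Complex.sq_norm, Complex.sq_norm] at h
    exact_mod_cast h
  rw [mul_comm, mul_comm ((starRingEnd ℂ) y), Complex.mul_conj, Complex.mul_conj]
  exact h'

lemma c_to_sq1 {x y : ℂ} (h : (starRingEnd ℂ) x * x + (starRingEnd ℂ) y * y = 1) :
    ‖x‖ ^ 2 + ‖y‖ ^ 2 = 1 := by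
  rw [mul_comm, mul_comm ((starRingEnd ℂ) y), Complex.mul_conj, Complex.mul_conj] at h
  have : ((‖x‖ ^ 2 + ‖y‖ ^ 2 : ℝ) : ℂ) = 1 := by
    rw [Complex.sq_norm, Complex.sq_norm]; push_cast; exact_mod_cast h
  exact_mod_cast this

lemma pick (u v : ℂ) : ∃ z w : ℂ,
    ‖z‖ ^ 2 + ‖w‖ ^ 2 = 1 ∧ (starRingEnd ℂ) w * u + z * v = 0 := by
  by_cases h : u = 0 ∧ v = 0
  · exact ⟨1, 0, by simp, by simp [h.1, h.2]⟩
  · have hpos : 0 < Complex.normSq u + Complex.normSq v := by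
      rcases not_and_or.mp h with h' | h'
      · have := Complex.normSq_pos.mpr h'
        nlinarith [Complex.normSq_nonneg v]
      · have := Complex.normSq_pos.mpr h'
        nlinarith [Complex.normSq_nonneg u]
    set r : ℝ := Real.sqrt (Complex.normSq u + Complex.normSq v) with hr
    have hrpos : 0 < r := Real.sqrt_pos.mpr hpos
    have hr2 : r ^ 2 = Complex.normSq u + Complex.normSq v := Real.sq_sqrt hpos.le
    refine ⟨-u / r, (starRingEnd ℂ) v / r, ?_, ?_⟩
    · have h1 : ‖-u / r‖ = ‖u‖ / r := by
        simp [map_div₀, Complex.norm_real, abs_of_pos hrpos]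
      have h2 : ‖(starRingEnd ℂ) v / r‖ = ‖v‖ / r := by
        simp [map_div₀, Complex.norm_real, abs_of_pos hrpos]
      rw [h1, h2, div_pow, div_pow, Complex.sq_norm, Complex.sq_norm]
      field_simp [hr2]
      linarith [hr2]
    · have hrne : (r : ℂ) ≠ 0 := by exact_mod_cast hrpos.ne'
      field_simp
      rw [map_div₀, Complex.conj_conj, Complex.conj_ofReal]
      have hrv : (r : ℂ) * (v / r) = v := by field_simp
      linear_combination u * hrv

lemma L02 (z w : ℂ) (h : ‖z‖ ^ 2 + ‖w‖ ^ 2 = 1) :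
    ∃ a b c : ℝ, RZ02 a * RY02 b * RZ02 c =
      !![z, 0, w; 0, 1, 0; -(starRingEnd ℂ) w, 0, (starRingEnd ℂ) z] := by
  obtain ⟨a, b, c, h1, h2, h3, h4⟩ := exists_zyz z w h
  refine ⟨a, b, c, ?_⟩
  rw [RZ02, RY02, RZ02, Matrix.mul_fin_three, Matrix.mul_fin_three]
  rw [← h3, ← h4, ← h1, ← h2]
  ext i j
  fin_cases i <;> fin_cases j <;> simp <;> ring

lemma L01 (z w : ℂ) (h : ‖z‖ ^ 2 + ‖w‖ ^ 2 = 1) :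
    ∃ a b c : ℝ, RZ01 a * RY01 b * RZ01 c =
      !![z, w, 0; -(starRingEnd ℂ) w, (starRingEnd ℂ) z, 0; 0, 0, 1] := by
  obtain ⟨a, b, c, h1, h2, h3, h4⟩ := exists_zyz z w h
  refine ⟨a, b, c, ?_⟩
  rw [RZ01, RY01, RZ01, Matrix.mul_fin_three, Matrix.mul_fin_three]
  rw [← h3, ← h4, ← h1, ← h2]
  ext i j
  fin_cases i <;> fin_cases j <;> simp <;> ring

lemma L12 (z w : ℂ) (h : ‖z‖ ^ 2 + ‖w‖ ^ 2 = 1) :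
    ∃ a b c : ℝ, RZ12 a * RY12 b * RZ12 c =
      !![1, 0, 0; 0, z, w; 0, -(starRingEnd ℂ) w, (starRingEnd ℂ) z] := by
  obtain ⟨a, b, c, h1, h2, h3, h4⟩ := exists_zyz z w h
  refine ⟨a, b, c, ?_⟩
  rw [RZ12, RY12, RZ12, Matrix.mul_fin_three, Matrix.mul_fin_three]
  rw [← h3, ← h4, ← h1, ← h2]
  ext i j
  fin_cases i <;> fin_cases j <;> simp <;> ring


lemma su3_decomp (V : Matrix (Fin 3) (Fin 3) ℂ) (hV : V ∈ Matrix.unitaryGroup (Fin 3) ℂ)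
    (hdet : V.det = 1) :
    ∃ a₁ a₂ a₃ a₄ a₅ a₆ a₇ a₈ a₉ : ℝ,
      V = RZ02 a₁ * RY02 a₂ * RZ02 a₃ * RZ01 a₄ * RY01 a₅ * RZ01 a₆ *
          RZ12 a₇ * RY12 a₈ * RZ12 a₉ := by
  obtain ⟨z, w, hzw, hgiv⟩ := pick (V 0 0) (V 2 0)
  have hzwc := sq1_to_c hzw
  set A : Matrix (Fin 3) (Fin 3) ℂ :=
    !![z, 0, w; 0, 1, 0; -(starRingEnd ℂ) w, 0, (starRingEnd ℂ) z] with hAdef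
  have hA2 : A * star A = 1 := by
    ext i j
    fin_cases i <;> fin_cases j <;>
      simp [hAdef, Matrix.mul_apply, Fin.sum_univ_three, Matrix.star_apply,
        Matrix.one_apply] <;>
      first
        | ring1
        | linear_combination hzwc
        | linear_combination -hzwc
  have hdetA : A.det = 1 := by
    rw [hAdef, Matrix.det_fin_three]
    simp
    first
      | ring1
      | linear_combination hzwc
      | linear_combination -hzwc
  have hV1 : star V * V = 1 := Matrix.mem_unitaryGroup_iff'.mp hV
  have hV2 : V * star V = 1 := Matrix.mem_unitaryGroup_iff.mp hV
  set W : Matrix (Fin 3) (Fin 3) ℂ := star A * V with hWdef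
  have hW1 : star W * W = 1 := by
    rw [hWdef, Matrix.star_mul, star_star, Matrix.mul_assoc, ← Matrix.mul_assoc A, hA2,
      Matrix.one_mul, hV1]
  have hW2 : W * star W = 1 := by
    rw [hWdef, Matrix.star_mul, star_star, Matrix.mul_assoc, ← Matrix.mul_assoc V, hV2,
      Matrix.one_mul]
    exact Matrix.mem_unitaryGroup_iff'.mp (Matrix.mem_unitaryGroup_iff.mpr hA2)
  have hdetstar : ∀ M : Matrix (Fin 3) (Fin 3) ℂ, M.det = 1 → (star M).det = 1 := by
    intro M hM
    rw [Matrix.star_eq_conjTranspose, Matrix.det_conjTranspose, hM]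
    simp
  have hdetW : W.det = 1 := by
    rw [hWdef, Matrix.det_mul, hdetstar A hdetA, hdet, one_mul]
  -- entry helpers
  have entry : ∀ (M N : Matrix (Fin 3) (Fin 3) ℂ) i j,
      (M * N) i j = M i 0 * N 0 j + M i 1 * N 1 j + M i 2 * N 2 j := by
    intro M N i j
    simp [Matrix.mul_apply, Fin.sum_univ_three]
  have hW20 : W 2 0 = 0 := by
    rw [hWdef, entry]
    simp [hAdef, Matrix.star_apply]
    first
      | linear_combination hgiv
      | linear_combination -hgiv
  -- column facts of W
  have hWcol : (starRingEnd ℂ) (W 0 0) * W 0 0 + (starRingEnd ℂ) (W 1 0) * W 1 0 = 1 := by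
    have h00 := congrFun (congrFun hW1 0) 0
    rw [entry] at h00
    simp [Matrix.star_apply, Matrix.one_apply, hW20] at h00
    first
      | linear_combination h00
      | linear_combination -h00
  -- B
  set B : Matrix (Fin 3) (Fin 3) ℂ :=
    !![W 0 0, -(starRingEnd ℂ) (W 1 0), 0; W 1 0, (starRingEnd ℂ) (W 0 0), 0; 0, 0, 1]
    with hBdef
  have hB2 : B * star B = 1 := by
    ext i j
    fin_cases i <;> fin_cases j <;>
      simp [hBdef, Matrix.mul_apply, Fin.sum_univ_three, Matrix.star_apply,
        Matrix.one_apply] <;>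
      first
        | ring1
        | linear_combination hWcol
        | linear_combination -hWcol
  have hdetB : B.det = 1 := by
    rw [hBdef, Matrix.det_fin_three]
    simp
    first
      | ring1
      | linear_combination hWcol
      | linear_combination -hWcol
  set X : Matrix (Fin 3) (Fin 3) ℂ := star B * W with hXdef
  have hX1 : star X * X = 1 := by
    rw [hXdef, Matrix.star_mul, star_star, Matrix.mul_assoc, ← Matrix.mul_assoc B, hB2,
      Matrix.one_mul, hW1]
  have hX2 : X * star X = 1 := by
    rw [hXdef, Matrix.star_mul, star_star, Matrix.mul_assoc, ← Matrix.mul_assoc W, hW2,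
      Matrix.one_mul]
    exact Matrix.mem_unitaryGroup_iff'.mp (Matrix.mem_unitaryGroup_iff.mpr hB2)
  have hdetX : X.det = 1 := by
    rw [hXdef, Matrix.det_mul, hdetstar B hdetB, hdetW, one_mul]
  -- column 0 of X
  have hX00 : X 0 0 = 1 := by
    rw [hXdef, entry]
    simp [hBdef, Matrix.star_apply, hW20]
    linear_combination hWcol
  have hX10 : X 1 0 = 0 := by
    rw [hXdef, entry]
    simp [hBdef, Matrix.star_apply, hW20]
    ring
  have hX20 : X 2 0 = 0 := by
    rw [hXdef, entry]
    simp [hBdef, Matrix.star_apply, hW20]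
  -- row 0 of X vanishes off-diagonal
  have hrow0 : X 0 1 * (starRingEnd ℂ) (X 0 1) + X 0 2 * (starRingEnd ℂ) (X 0 2) = 0 := by
    have h00 := congrFun (congrFun hX2 0) 0
    rw [entry] at h00
    simp [Matrix.star_apply, Matrix.one_apply, hX00] at h00
    first
      | linear_combination h00
      | linear_combination -h00
  have hX01 : X 0 1 = 0 := by
    have h1 : Complex.normSq (X 0 1) + Complex.normSq (X 0 2) = 0 := by
      have := hrow0
      rw [Complex.mul_conj, Complex.mul_conj] at this
      exact_mod_cast this
    have := Complex.normSq_eq_zero.mp (le_antisymm (by nlinarith [Complex.normSq_nonneg (X 0 2)]) (Complex.normSq_nonneg (X 0 1)))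
    exact this
  have hX02 : X 0 2 = 0 := by
    have h1 : Complex.normSq (X 0 1) + Complex.normSq (X 0 2) = 0 := by
      have := hrow0
      rw [Complex.mul_conj, Complex.mul_conj] at this
      exact_mod_cast this
    exact Complex.normSq_eq_zero.mp (le_antisymm (by nlinarith [Complex.normSq_nonneg (X 0 1)]) (Complex.normSq_nonneg (X 0 2)))
  -- determinant identity for the 2x2 block
  have hdet2 : X 1 1 * X 2 2 - X 1 2 * X 2 1 = 1 := by
    have := hdetX
    rw [Matrix.det_fin_three, hX00, hX01, hX02, hX10, hX20] at this
    linear_combination this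
  -- unitarity facts for the 2x2 block
  have h11 : (starRingEnd ℂ) (X 1 1) * X 1 1 + (starRingEnd ℂ) (X 2 1) * X 2 1 = 1 := by
    have h := congrFun (congrFun hX1 1) 1
    rw [entry] at h
    simp [Matrix.star_apply, Matrix.one_apply, hX01] at h
    first
      | linear_combination h
      | linear_combination -h
  have h22n : (starRingEnd ℂ) (X 1 2) * X 1 2 + (starRingEnd ℂ) (X 2 2) * X 2 2 = 1 := by
    have h := congrFun (congrFun hX1 2) 2
    rw [entry] at h
    simp [Matrix.star_apply, Matrix.one_apply, hX02] at h
    first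
      | linear_combination h
      | linear_combination -h
  have h12 : (starRingEnd ℂ) (X 1 1) * X 1 2 + (starRingEnd ℂ) (X 2 1) * X 2 2 = 0 := by
    have h := congrFun (congrFun hX1 1) 2
    rw [entry] at h
    simp [Matrix.star_apply, Matrix.one_apply, hX01, hX02] at h
    first
      | linear_combination h
      | linear_combination -h
  have h21 : (starRingEnd ℂ) (X 1 2) * X 1 1 + (starRingEnd ℂ) (X 2 2) * X 2 1 = 0 := by
    have h := congrFun (congrFun hX1 2) 1
    rw [entry] at h
    simp [Matrix.star_apply, Matrix.one_apply, hX01, hX02] at h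
    first
      | linear_combination h
      | linear_combination -h
  have hX22 : X 2 2 = (starRingEnd ℂ) (X 1 1) := by
    linear_combination (starRingEnd ℂ) (X 1 1) * hdet2 + X 2 1 * h12 - X 2 2 * h11
  have hX21 : X 2 1 = -(starRingEnd ℂ) (X 1 2) := by
    linear_combination (-(starRingEnd ℂ) (X 1 2)) * hdet2 + X 2 2 * h21 - X 2 1 * h22n
  -- row norm for L12 hypothesis
  have hXrow : (starRingEnd ℂ) (X 1 1) * X 1 1 + (starRingEnd ℂ) (X 1 2) * X 1 2 = 1 := by
    have h := congrFun (congrFun hX2 1) 1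
    rw [entry] at h
    simp [Matrix.star_apply, Matrix.one_apply, hX10] at h
    first
      | linear_combination h
      | linear_combination -h
  -- X has the M12 form
  have hXform : X = !![1, 0, 0; 0, X 1 1, X 1 2;
      0, -(starRingEnd ℂ) (X 1 2), (starRingEnd ℂ) (X 1 1)] := by
    ext i j
    fin_cases i <;> fin_cases j <;>
      simp [hX00, hX01, hX02, hX10, hX20, hX21, hX22, Matrix.vecHead, Matrix.vecTail]
  -- assemble
  have hVeq : V = A * (B * X) := by
    rw [hXdef, hWdef, ← Matrix.mul_assoc B, hB2, Matrix.one_mul, ← Matrix.mul_assoc A,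
      hA2, Matrix.one_mul]
  obtain ⟨a1, a2, a3, hL1⟩ := L02 z w hzw
  obtain ⟨a4, a5, a6, hL2⟩ := L01 (W 0 0) (-(starRingEnd ℂ) (W 1 0))
    (by
      have : ‖-(starRingEnd ℂ) (W 1 0)‖ = ‖W 1 0‖ := by simp
      rw [this]
      exact c_to_sq1 hWcol)
  obtain ⟨a7, a8, a9, hL3⟩ := L12 (X 1 1) (X 1 2) (c_to_sq1 hXrow)
  refine ⟨a1, a2, a3, a4, a5, a6, a7, a8, a9, ?_⟩
  have hBeq : RZ01 a4 * RY01 a5 * RZ01 a6 = B := by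
    rw [hL2, hBdef]
    congr 1 <;> simp
  have hXeq : RZ12 a7 * RY12 a8 * RZ12 a9 = X := by
    rw [hL3]; exact hXform.symm
  rw [show RZ02 a1 * RY02 a2 * RZ02 a3 * RZ01 a4 * RY01 a5 * RZ01 a6 *
        RZ12 a7 * RY12 a8 * RZ12 a9 =
      (RZ02 a1 * RY02 a2 * RZ02 a3) * ((RZ01 a4 * RY01 a5 * RZ01 a6) *
        (RZ12 a7 * RY12 a8 * RZ12 a9)) by
    simp only [Matrix.mul_assoc]]
  rw [hL1, hBeq, hXeq, ← hAdef]
  exact hVeq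

theorem stmt7 (m : ℕ) (hm : 0 < m) (U : Fin m → Matrix (Fin 3) (Fin 3) ℂ)
    (hU : ∀ j, U j ∈ Matrix.unitaryGroup (Fin 3) ℂ) (hdet : ∀ j, (U j).det = 1) :
    ∃ α₁ α₂ α₃ α₄ α₅ α₆ α₇ α₈ α₉ : Fin m → ℝ,
      Matrix.blockDiagonal U =
        D RZ02 α₁ * D RY02 α₂ * D RZ02 α₃ *
        D RZ01 α₄ * D RY01 α₅ * D RZ01 α₆ *
        D RZ12 α₇ * D RY12 α₈ * D RZ12 α₉ := by
  have hk := fun j => su3_decomp (U j) (hU j) (hdet j)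
  choose a1 a2 a3 a4 a5 a6 a7 a8 a9 h using hk
  refine ⟨a1, a2, a3, a4, a5, a6, a7, a8, a9, ?_⟩
  have hU' : U = fun j => RZ02 (a1 j) * RY02 (a2 j) * RZ02 (a3 j) * RZ01 (a4 j) *
      RY01 (a5 j) * RZ01 (a6 j) * RZ12 (a7 j) * RY12 (a8 j) * RZ12 (a9 j) := funext h
  rw [hU']
  simp only [D, ← Matrix.blockDiagonal_mul]
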